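/- Let n be a positive integer and λ an infinite cardinal, and let τ be a shift-continuous T₁ topology on I_λ^n. If (I_λ^n, τ) is infra H-closed (every continuous image in a first countable Hausdorff space is closed), then τ is feebly compact. In particular, if (I_λ^n, τ) is ℝ-compact (every continuous real-valued image is compact) then τ is feebly compact. -/

import Mathlib

open Set Topology

universe v

namespace ISemi

/-- The set of partial injective transformations (partial bijections) of `ι`
with rank (cardinality of the range, equivalently of the domain) at most `n`. -/
def Elem (ι : Type*) (n : ℕ) : Type _ :=
  {f : ι ≃. ι // {a : ι | (f a).isSome}.encard ≤ (n : ℕ∞)}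

variable {ι : Type*} {n : ℕ}

/-- Composition of partial bijections (written multiplicatively). -/
instance : Semigroup (Elem ι n) where
  mul f g := ⟨f.1.trans g.1, by
    refine le_trans (Set.encard_mono ?_) f.2
    intro a ha
    simp only [Set.mem_setOf_eq] at *
    rcases Option.isSome_iff_exists.1 ha with ⟨c, hc⟩
    rcases (PEquiv.trans_eq_some _ _ _ _).1 hc with ⟨b, hb, -⟩
    simp [hb]⟩
  mul_assoc f g h := Subtype.ext (PEquiv.trans_assoc f.1 g.1 h.1)

/-- The inverse partial bijection. -/
def inv (f : Elem ι n) : Elem ι n := ⟨f.1.symm, by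
  have key : ∀ (g : ι ≃. ι), {b : ι | (g.symm b).isSome} ⊆
      (fun p : {a : ι | (g a).isSome} => (g p.1).get p.2) '' Set.univ := by
    intro g b hb
    rcases Option.isSome_iff_exists.1 hb with ⟨a, ha⟩
    have ha' : b ∈ g a := (PEquiv.mem_iff_mem g).1 (Option.mem_def.2 ha)
    simp only [Option.mem_def] at ha'
    refine ⟨⟨a, ?_⟩, Set.mem_univ _, ?_⟩
    · simp [Set.mem_setOf_eq, ha']
    · simp [ha']
  calc {b : ι | (f.1.symm b).isSome}.encard
      ≤ ((fun p : {a : ι | (f.1 a).isSome} => (f.1 p.1).get p.2) '' Set.univ).encard :=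
        Set.encard_mono (key f.1)
    _ ≤ (Set.univ : Set {a : ι | (f.1 a).isSome}).encard := Set.encard_image_le _ _
    _ = {a : ι | (f.1 a).isSome}.encard := by rw [Set.encard_univ, ENat.card_coe_set_eq]
    _ ≤ (n : ℕ∞) := f.2⟩

/-- The zero (the empty partial map). -/
def zero (ι : Type*) (n : ℕ) : Elem ι n := ⟨⊥, by simp [PEquiv.bot_apply]⟩

/-- idempotents -/
def IsIdem (e : Elem ι n) : Prop := e * e = e

/-- The natural partial order on the inverse semigroup `Elem ι n`:
`f ≼ g` iff `f = e * g` for some idempotent `e`. -/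
def nle (f g : Elem ι n) : Prop := ∃ e : Elem ι n, IsIdem e ∧ f = e * g

/-- up-set of `f` w.r.t. the natural partial order -/
def upset (f : Elem ι n) : Set (Elem ι n) := {g | nle f g}

/-- the rank of a partial bijection: the cardinality of its domain (= range) -/
noncomputable def rank (f : Elem ι n) : ℕ∞ := {a : ι | (f.1 a).isSome}.encard

def dom (f : Elem ι n) : Set ι := {a : ι | (f.1 a).isSome}

def ran (f : Elem ι n) : Set ι := {b : ι | (f.1.symm b).isSome}

/-- A topology on `Elem ι n` is shift-continuous if all left and right
translations are continuous. -/
def ShiftContinuous (ι : Type*) (n : ℕ) [TopologicalSpace (Elem ι n)] : Prop :=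
  ∀ a : Elem ι n, Continuous (fun x : Elem ι n => a * x) ∧
    Continuous (fun x : Elem ι n => x * a)

/-- A space is feebly compact if every locally finite family of nonempty open
sets is finite. -/
def FeeblyCompact (X : Type*) [TopologicalSpace X] : Prop :=
  ∀ 𝒰 : Set (Set X), (∀ U ∈ 𝒰, IsOpen U ∧ U.Nonempty) →
    LocallyFinite (fun U : 𝒰 => (U : Set X)) → 𝒰.Finite

/-- A space is `d`-feebly compact if every discrete family of open sets is
finite; a family is discrete if every point has a neighbourhood meeting at
most one member of the family. -/
def DFeeblyCompact (X : Type*) [TopologicalSpace X] : Prop :=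
  ∀ 𝒰 : Set (Set X), (∀ U ∈ 𝒰, IsOpen U) →
    (∀ x : X, ∃ V ∈ 𝓝 x, {U ∈ 𝒰 | (U ∩ V).Nonempty}.Subsingleton) → 𝒰.Finite

/-- countably pracompact: there is a dense set `A` such that every infinite
subset of `A` has an accumulation point in `X`. -/
def CountablyPracompact (X : Type*) [TopologicalSpace X] : Prop :=
  ∃ A : Set X, Dense A ∧ ∀ B ⊆ A, B.Infinite → ∃ x : X, AccPt x (Filter.principal B)

/-- H-closed: closed in every Hausdorff space in which it embeds. -/
def HClosed (X : Type*) [TopologicalSpace X] : Prop :=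
  ∀ (Y : Type v) (_ : TopologicalSpace Y), T2Space Y →
    ∀ e : X → Y, IsEmbedding e → IsClosed (Set.range e)

/-- infra H-closed: every continuous image in a first-countable Hausdorff
space is closed. -/
def InfraHClosed (X : Type*) [TopologicalSpace X] : Prop :=
  ∀ (Y : Type v) (_ : TopologicalSpace Y), T2Space Y →
    FirstCountableTopology Y → ∀ f : X → Y, Continuous f → IsClosed (Set.range f)

/-- `Y`-compactness: every continuous image in `Y` is compact. -/
def YCompact (X : Type*) [TopologicalSpace X] (Y : Type*) [TopologicalSpace Y] : Prop :=
  ∀ f : X → Y, Continuous f → IsCompact (Set.range f)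

/-- scattered: every nonempty subset has a point isolated in it. -/
def Scattered (X : Type*) [TopologicalSpace X] : Prop :=
  ∀ S : Set X, S.Nonempty → ∃ x ∈ S, ∃ U : Set X, IsOpen U ∧ U ∩ S = {x}

/-- semiregular: there is a base consisting of regular open sets. -/
def Semiregular (X : Type*) [TopologicalSpace X] : Prop :=
  ∃ B : Set (Set X), TopologicalSpace.IsTopologicalBasis B ∧
    ∀ U ∈ B, interior (closure U) = U

/-- countably compact: every countable open cover has a finite subcover. -/
def CountablyCompact (X : Type*) [TopologicalSpace X] : Prop :=
  ∀ 𝒰 : Set (Set X), 𝒰.Countable → (∀ U ∈ 𝒰, IsOpen U) → ⋃₀ 𝒰 = Set.univ →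
    ∃ 𝒱 ⊆ 𝒰, 𝒱.Finite ∧ ⋃₀ 𝒱 = Set.univ

end ISemi

namespace ISemi

variable {ι : Type*} {n : ℕ}

lemma mul_fst (f g : Elem ι n) : (f * g).1 = f.1.trans g.1 := rfl

lemma mul_apply (f g : Elem ι n) (a : ι) : (f * g).1 a = (f.1 a).bind g.1 := rfl

/-- the idempotent given by a subset of size ≤ n -/
noncomputable def idem (s : Set ι) (h : s.encard ≤ (n : ℕ∞)) : Elem ι n :=
  ⟨@PEquiv.ofSet ι s (Classical.decPred _), by
    have hs : {a : ι | ((@PEquiv.ofSet ι s (Classical.decPred _)) a).isSome} = s := by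
      ext a
      simp only [Set.mem_setOf_eq, Option.isSome_iff_exists]
      constructor
      · rintro ⟨b, hb⟩
        obtain ⟨rfl, hb'⟩ := PEquiv.ofSet_eq_some_iff.1 hb
        exact hb'
      · intro ha
        exact ⟨a, PEquiv.ofSet_eq_some_self_iff.2 ha⟩
    rw [hs]; exact h⟩

lemma idem_apply_of_mem {s : Set ι} {h : s.encard ≤ (n : ℕ∞)} {a : ι} (ha : a ∈ s) :
    (idem (n := n) s h).1 a = some a :=
  PEquiv.ofSet_eq_some_self_iff.2 ha

lemma idem_apply_of_not_mem {s : Set ι} {h : s.encard ≤ (n : ℕ∞)} {a : ι} (ha : a ∉ s) :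
    (idem (n := n) s h).1 a = none := by
  cases h' : (idem (n := n) s h).1 a with
  | none => rfl
  | some b =>
    obtain ⟨rfl, hb⟩ := PEquiv.ofSet_eq_some_iff.1 h'
    exact absurd hb ha

lemma pi_eq_some {D R : Set ι} (hD : D.encard ≤ (n : ℕ∞)) (hR : R.encard ≤ (n : ℕ∞))
    (x : Elem ι n) (a b : ι) :
    (idem D hD * x * idem R hR).1 a = some b ↔ a ∈ D ∧ x.1 a = some b ∧ b ∈ R := by
  rw [mul_apply, mul_apply]
  by_cases ha : a ∈ D
  · rw [idem_apply_of_mem ha, Option.bind_some]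
    cases hx : x.1 a with
    | none =>
      simp only [Option.bind_none]
      constructor
      · rintro h; cases h
      · rintro ⟨-, h, -⟩; cases h
    | some c =>
      rw [Option.bind_some]
      by_cases hc : c ∈ R
      · rw [idem_apply_of_mem hc]
        constructor
        · rintro h
          obtain rfl : c = b := Option.some_injective _ h
          exact ⟨ha, rfl, hc⟩
        · rintro ⟨-, h, -⟩
          obtain rfl : c = b := Option.some_injective _ h
          rfl
      · rw [idem_apply_of_not_mem hc]
        constructor
        · rintro h; cases h
        · rintro ⟨-, h, hb⟩
          obtain rfl : c = b := Option.some_injective _ h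
          exact absurd hb hc
  · rw [idem_apply_of_not_mem ha, Option.bind_none]
    constructor
    · rintro h; cases h
    · rintro ⟨h, -⟩; exact absurd h ha

lemma ran_encard_le (f : Elem ι n) : (ran f).encard ≤ (n : ℕ∞) := (inv f).2

lemma dom_finite (f : Elem ι n) : (dom f).Finite :=
  (Set.encard_le_coe_iff_finite_ncard_le.1 f.2).1

lemma dom_ncard_le (f : Elem ι n) : (dom f).ncard ≤ n :=
  (Set.encard_le_coe_iff_finite_ncard_le.1 f.2).2

lemma ran_finite (f : Elem ι n) : (ran f).Finite :=
  (Set.encard_le_coe_iff_finite_ncard_le.1 (ran_encard_le f)).1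

/-- the set of elements with domain in `D` and range in `R` is finite when `D`, `R` are -/
lemma finite_bounded {D R : Set ι} (hD : D.Finite) (hR : R.Finite) :
    {g : Elem ι n | ∀ a b, g.1 a = some b → a ∈ D ∧ b ∈ R}.Finite := by
  set Φ : Elem ι n → Set (ι × ι) := fun g => {p : ι × ι | g.1 p.1 = some p.2} with hΦ
  have himg : Φ '' {g : Elem ι n | ∀ a b, g.1 a = some b → a ∈ D ∧ b ∈ R} ⊆
      {t : Set (ι × ι) | t ⊆ D ×ˢ R} := by
    rintro _ ⟨g, hg, rfl⟩ ⟨a, b⟩ hp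
    exact ⟨(hg a b hp).1, (hg a b hp).2⟩
  refine Set.Finite.of_finite_image (((hD.prod hR).finite_subsets).subset himg) ?_
  intro g _ g' _ h
  have hmem : ∀ a b, g.1 a = some b ↔ g'.1 a = some b := by
    intro a b
    have := Set.ext_iff.1 h (a, b)
    simpa [hΦ] using this
  refine Subtype.ext (PEquiv.ext fun a => ?_)
  cases h1 : g'.1 a with
  | some b => exact (hmem a b).2 h1
  | none =>
    cases h2 : g.1 a with
    | none => rfl
    | some b =>
      have := (hmem a b).1 h2
      rw [h1] at this
      cases this

/-- Every nonempty open set contains an isolated point. -/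
lemma exists_isolated [TopologicalSpace (Elem ι n)] [T1Space (Elem ι n)]
    (hshift : ShiftContinuous ι n) {U : Set (Elem ι n)} (hU : IsOpen U) (hne : U.Nonempty) :
    ∃ x ∈ U, IsOpen ({x} : Set (Elem ι n)) := by
  -- choose f ∈ U of maximal rank
  obtain ⟨f, hfU, hfmax⟩ : ∃ f ∈ U, ∀ g ∈ U, (dom g).ncard ≤ (dom f).ncard := by
    set M : Set ℕ := {m : ℕ | ∃ g ∈ U, (dom g).ncard = m} with hM
    have hbdd : BddAbove M := by
      refine ⟨n, ?_⟩
      rintro m ⟨g, _, rfl⟩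
      exact dom_ncard_le g
    obtain ⟨g₀, hg₀⟩ := hne
    have hMne : M.Nonempty := ⟨_, g₀, hg₀, rfl⟩
    obtain ⟨f, hfU, hfcard⟩ := Nat.sSup_mem hMne hbdd
    refine ⟨f, hfU, fun g hg => ?_⟩
    rw [hfcard]
    exact le_csSup hbdd ⟨g, hg, rfl⟩
  set D := dom f with hDdef
  set R := ran f with hRdef
  set ed : Elem ι n := idem D f.2 with hed
  set er : Elem ι n := idem R (ran_encard_le f) with her
  set π : Elem ι n → Elem ι n := fun x => ed * x * er with hπ
  have hπcont : Continuous π := ((hshift er).2).comp ((hshift ed).1)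
  have hπsome : ∀ x a b, (π x).1 a = some b ↔ a ∈ D ∧ x.1 a = some b ∧ b ∈ R := by
    intro x a b
    exact pi_eq_some f.2 (ran_encard_le f) x a b
  set T : Set (Elem ι n) := {g : Elem ι n | ∀ a b, g.1 a = some b → a ∈ D ∧ b ∈ R} with hT
  have hTfin : T.Finite := finite_bounded (dom_finite f) (ran_finite f)
  have hπT : ∀ x, π x ∈ T := by
    intro x a b hab
    obtain ⟨h1, -, h3⟩ := (hπsome x a b).1 hab
    exact ⟨h1, h3⟩
  have hπf : π f = f := by
    refine Subtype.ext (PEquiv.ext fun a => ?_)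
    by_cases ha : a ∈ D
    · obtain ⟨b, hb⟩ := Option.isSome_iff_exists.1 ha
      have hbR : b ∈ R := by
        show (f.1.symm b).isSome
        rw [(PEquiv.eq_some_iff f.1).2 hb]
        rfl
      rw [hb]
      exact (hπsome f a b).2 ⟨ha, hb, hbR⟩
    · have h1 : f.1 a = none := Option.not_isSome_iff_eq_none.1 ha
      rw [h1]
      cases h2 : (π f).1 a with
      | none => rfl
      | some b => exact absurd ((hπsome f a b).1 h2).1 ha
  have hopenπ : IsOpen (π ⁻¹' {f}) := by
    have heq : π ⁻¹' {f} = (π ⁻¹' (T \ {f}))ᶜ := by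
      ext x
      simp only [Set.mem_preimage, Set.mem_singleton_iff, Set.mem_compl_iff, Set.mem_diff]
      constructor
      · intro hx hmem
        exact hmem.2 hx
      · intro h
        by_contra hne'
        exact h ⟨hπT x, hne'⟩
    rw [heq]
    exact (((hTfin.subset Set.diff_subset).isClosed).preimage hπcont).isOpen_compl
  have hsingle : U ∩ π ⁻¹' {f} = {f} := by
    apply Set.Subset.antisymm
    · rintro x ⟨hxU, hxπ⟩
      have hxf : π x = f := hxπ
      have hagree : ∀ a ∈ D, x.1 a = f.1 a ∧ (x.1 a).isSome := by
        intro a ha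
        obtain ⟨b, hb⟩ := Option.isSome_iff_exists.1 ha
        have : (π x).1 a = some b := by rw [hxf, hb]
        obtain ⟨-, h2, -⟩ := (hπsome x a b).1 this
        rw [h2, hb]
        exact ⟨rfl, rfl⟩
      have hsub : D ⊆ dom x := fun a ha => (hagree a ha).2
      have hcard : (dom x).ncard ≤ D.ncard := hfmax x hxU
      have hDeq : D = dom x := Set.eq_of_subset_of_ncard_le hsub hcard (dom_finite x)
      refine Set.mem_singleton_iff.2 (Subtype.ext (PEquiv.ext fun a => ?_))
      by_cases ha : a ∈ D
      · exact (hagree a ha).1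
      · have h2 : f.1 a = none := Option.not_isSome_iff_eq_none.1 ha
        rw [hDeq] at ha
        have h1 : x.1 a = none := Option.not_isSome_iff_eq_none.1 ha
        rw [h1, h2]
    · rintro x rfl
      exact ⟨hfU, by simp [hπf]⟩
  exact ⟨f, hfU, hsingle ▸ hU.inter hopenπ⟩

/-- If every continuous real-valued function on `Elem ι n` has closed range, then the
topology is feebly compact. -/
lemma feeblyCompact_of_closed_ranges [TopologicalSpace (Elem ι n)] [T1Space (Elem ι n)]
    (hshift : ShiftContinuous ι n)
    (hcl : ∀ f : Elem ι n → ℝ, Continuous f → IsClosed (Set.range f)) :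
    FeeblyCompact (Elem ι n) := by
  intro 𝒰 h𝒰 hlf
  by_contra hfin
  have hinf : 𝒰.Infinite := hfin
  set u : ℕ ↪ ↥𝒰 := hinf.natEmbedding 𝒰 with hu
  choose x hxU hxiso using fun k : ℕ =>
    exists_isolated hshift (h𝒰 _ (u k).2).1 (h𝒰 _ (u k).2).2
  -- point-finiteness of the family along any set witnessing local finiteness
  have hptfin : ∀ V : Set (Elem ι n),
      {W : ↥𝒰 | ((W : Set (Elem ι n)) ∩ V).Nonempty}.Finite → {k : ℕ | x k ∈ V}.Finite := by
    intro V hV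
    refine (hV.preimage (u.injective.injOn)).subset ?_
    intro k hk
    exact ⟨x k, hxU k, hk⟩
  -- the set of chosen isolated points is infinite
  have hAinf : (Set.range x).Infinite := by
    intro hA
    haveI : Finite ↥(Set.range x) := hA.to_subtype
    obtain ⟨y, hy⟩ := Finite.exists_infinite_fiber (fun k : ℕ => (⟨x k, Set.mem_range_self k⟩ :
      ↥(Set.range x)))
    obtain ⟨V, hV, hVfin⟩ := hlf (y : Elem ι n)
    have h1 : {k : ℕ | x k ∈ V}.Finite := hptfin V hVfin
    have h2 : {k : ℕ | (⟨x k, Set.mem_range_self k⟩ : ↥(Set.range x)) = y} ⊆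
        {k : ℕ | x k ∈ V} := by
      intro k hk
      have : x k = (y : Elem ι n) := congrArg Subtype.val hk
      rw [Set.mem_setOf_eq, this]
      exact mem_of_mem_nhds hV
    have h3 : {k : ℕ | (⟨x k, Set.mem_range_self k⟩ : ↥(Set.range x)) = y}.Infinite := by
      rw [← Set.infinite_coe_iff]
      exact hy
    exact h3 (h1.subset h2)
  set j : ℕ ↪ ↥(Set.range x) := hAinf.natEmbedding _ with hj
  set p : ℕ → Elem ι n := fun m => (j m : Elem ι n) with hp
  have hpinj : Function.Injective p := fun m m' h => j.injective (Subtype.ext h)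
  set f : Elem ι n → ℝ := Function.extend p (fun m => (m : ℝ) / (m + 1)) (fun _ => 0) with hf
  have hfp : ∀ m : ℕ, f (p m) = (m : ℝ) / (m + 1) := fun m =>
    hpinj.extend_apply _ _ m
  have hf0 : ∀ y, y ∉ Set.range p → f y = 0 := fun y hy =>
    Function.extend_apply' _ _ _ (fun ⟨m, hm⟩ => hy ⟨m, hm⟩)
  have hrangep : Set.range p ⊆ Set.range x := fun y ⟨m, hm⟩ => hm ▸ (j m).2
  have hfcont : Continuous f := by
    rw [continuous_iff_continuousAt]
    intro y
    by_cases hy : y ∈ Set.range x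
    · obtain ⟨k, rfl⟩ := hy
      rw [ContinuousAt, (isOpen_singleton_iff_nhds_eq_pure _).1 (hxiso k)]
      exact tendsto_pure_nhds f (x k)
    · obtain ⟨V, hV, hVfin⟩ := hlf y
      have hKfin : {k : ℕ | x k ∈ V}.Finite := hptfin V hVfin
      set W : Set (Elem ι n) := interior V \ (x '' {k : ℕ | x k ∈ V}) with hW
      have hWopen : IsOpen W :=
        IsOpen.sdiff isOpen_interior ((hKfin.image x).isClosed)
      have hyW : y ∈ W := by
        refine ⟨mem_interior_iff_mem_nhds.2 hV, ?_⟩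
        rintro ⟨k, -, hk⟩
        exact hy ⟨k, hk⟩
      have hfW : ∀ z ∈ W, f z = 0 := by
        intro z hz
        refine hf0 z fun hzp => ?_
        obtain ⟨k, hk⟩ := hrangep hzp
        refine hz.2 ⟨k, ?_, hk⟩
        rw [Set.mem_setOf_eq, hk]
        exact interior_subset hz.1
      refine ContinuousAt.congr (continuousAt_const (y := (0 : ℝ))) ?_
      exact Filter.eventuallyEq_of_mem (hWopen.mem_nhds hyW) fun z hz => (hfW z hz).symm
  -- the range of f is not closed: 1 is in its closure but not in the range
  have hclf := hcl f hfcont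
  have htend : Filter.Tendsto (fun m : ℕ => f (p m)) Filter.atTop (nhds 1) := by
    have : (fun m : ℕ => f (p m)) = fun m : ℕ => (m : ℝ) / (m + 1) := funext hfp
    rw [this]
    exact tendsto_natCast_div_add_atTop (1 : ℝ)
  have h1mem : (1 : ℝ) ∈ Set.range f :=
    hclf.mem_of_tendsto htend (Filter.Eventually.of_forall fun m => Set.mem_range_self _)
  obtain ⟨z, hz⟩ := h1mem
  by_cases hzp : z ∈ Set.range p
  · obtain ⟨m, rfl⟩ := hzp
    rw [hfp m] at hz
    have hlt : (m : ℝ) / (m + 1) < 1 := by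
      rw [div_lt_one (by positivity)]
      linarith [Nat.cast_nonneg (α := ℝ) m]
    rw [hz] at hlt
    exact lt_irrefl _ hlt
  · rw [hf0 z hzp] at hz
    exact one_ne_zero hz.symm

end ISemi


theorem stmt17 (ι : Type*) [Infinite ι] (n : ℕ) (hn : 0 < n)
    [TopologicalSpace (ISemi.Elem ι n)] [T1Space (ISemi.Elem ι n)]
    (hshift : ISemi.ShiftContinuous ι n) :
    (ISemi.InfraHClosed (ISemi.Elem ι n) → ISemi.FeeblyCompact (ISemi.Elem ι n)) ∧
    (ISemi.YCompact (ISemi.Elem ι n) ℝ → ISemi.FeeblyCompact (ISemi.Elem ι n)) := by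
  constructor
  · intro hinfra
    apply ISemi.feeblyCompact_of_closed_ranges hshift
    intro f hf
    have hcl := hinfra (ULift ℝ) inferInstance
      ((Homeomorph.ulift (X := ℝ)).isEmbedding.t2Space)
      ((Homeomorph.ulift (X := ℝ)).isEmbedding.firstCountableTopology)
      (fun x => ULift.up (f x)) (continuous_uliftUp.comp hf)
    have hclosed := (Homeomorph.ulift (X := ℝ)).isClosed_image.2 hcl
    convert hclosed using 1
    ext r
    constructor
    · rintro ⟨z, rfl⟩
      exact ⟨ULift.up (f z), ⟨z, rfl⟩, rfl⟩
    · rintro ⟨w, ⟨z, rfl⟩, rfl⟩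
      exact ⟨z, rfl⟩
  · intro hY
    exact ISemi.feeblyCompact_of_closed_ranges hshift fun f hf => (hY f hf).isClosed
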